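/- Let 0 < θ < 1 and let c ≤ 0. Then ∫₀^∞ [ h (h − c) / (π θ^{3/2} (1 − θ)^{3/2}) ] · exp( − h²/(2θ) − (h − c)²/(2(1 − θ)) ) dh = (|c| (1 − θ) exp(−c²/(2(1 − θ)))) / (π √(θ(1 − θ))) − ((c² − 1) exp(−c²/2) · erfc( |c| √(θ/(2(1 − θ))) )) / √(2π). (Joint density of the argmax and the close for a nonpositive close.) -/

import Mathlib

open Real MeasureTheory Set Filter

noncomputable def erf (z : ℝ) : ℝ := 2 / Real.sqrt π * ∫ u in (0:ℝ)..z, Real.exp (-u ^ 2)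

noncomputable def erfc (z : ℝ) : ℝ := 1 - erf z

lemma erf_hasDerivAt (z : ℝ) :
    HasDerivAt erf (2 / Real.sqrt π * Real.exp (-z ^ 2)) z := by
  have hcont : Continuous fun u : ℝ => Real.exp (-u ^ 2) := by continuity
  exact ((hcont.integral_hasStrictDerivAt 0 z).hasDerivAt).const_mul (2 / Real.sqrt π)

lemma erf_tendsto_one : Tendsto erf atTop (nhds 1) := by
  have hi : IntegrableOn (fun u : ℝ => Real.exp (-u ^ 2)) (Ioi 0) := by
    have := (integrable_exp_neg_mul_sq (one_pos)).integrableOn (s := Ioi 0)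
    simpa using this
  have h0 : (∫ u in Ioi (0:ℝ), Real.exp (-u ^ 2)) = Real.sqrt π / 2 := by
    have := integral_gaussian_Ioi 1
    simpa using this
  have ht := intervalIntegral_tendsto_integral_Ioi 0 hi tendsto_id
  rw [h0] at ht
  have h2 := ht.const_mul (2 / Real.sqrt π)
  have hπ : Real.sqrt π ≠ 0 := by positivity
  have he : (2 / Real.sqrt π) * (Real.sqrt π / 2) = 1 := by field_simp
  rw [he] at h2
  exact h2

theorem stmt16 (θ c : ℝ) (hθ0 : 0 < θ) (hθ1 : θ < 1) (hc : c ≤ 0) :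
    ∫ h in Ioi (0 : ℝ),
        h * (h - c) / (π * θ ^ ((3 : ℝ) / 2) * (1 - θ) ^ ((3 : ℝ) / 2)) *
          Real.exp (-h ^ 2 / (2 * θ) - (h - c) ^ 2 / (2 * (1 - θ))) =
      |c| * (1 - θ) * Real.exp (-c ^ 2 / (2 * (1 - θ))) / (π * Real.sqrt (θ * (1 - θ))) -
        (c ^ 2 - 1) * Real.exp (-c ^ 2 / 2) *
            erfc (|c| * Real.sqrt (θ / (2 * (1 - θ)))) / Real.sqrt (2 * π) := by
  have h1θ : 0 < 1 - θ := by linarith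
  set b : ℝ := 1 / (2 * θ * (1 - θ)) with hb_def
  have hb : 0 < b := by positivity
  set m : ℝ := θ * c with hm_def
  set A : ℝ := Real.exp (-c ^ 2 / 2) / (π * θ ^ ((3 : ℝ) / 2) * (1 - θ) ^ ((3 : ℝ) / 2))
    with hA_def
  set K : ℝ := 1 / (2 * b) + m * (m - c) with hK_def
  set sb : ℝ := Real.sqrt b with hsb_def
  have hsb : 0 < sb := Real.sqrt_pos.mpr hb
  have hsb2 : sb ^ 2 = b := Real.sq_sqrt hb.le
  have hsπ : 0 < Real.sqrt π := Real.sqrt_pos.mpr Real.pi_pos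
  -- the integrand in convenient form
  set f : ℝ → ℝ := fun h => A * (h * (h - c)) * Real.exp (-b * (h - m) ^ 2) with hf_def
  -- antiderivative
  set F : ℝ → ℝ := fun h =>
    A * (-((h - m) + (2 * m - c)) / (2 * b) * Real.exp (-b * (h - m) ^ 2)
      + K * (Real.sqrt π / (2 * sb)) * erf (sb * (h - m))) with hF_def
  -- step 1 : integrand = f
  have hcongr : ∀ h : ℝ,
      h * (h - c) / (π * θ ^ ((3 : ℝ) / 2) * (1 - θ) ^ ((3 : ℝ) / 2)) *
        Real.exp (-h ^ 2 / (2 * θ) - (h - c) ^ 2 / (2 * (1 - θ))) = f h := by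
    intro h
    have hexp : -h ^ 2 / (2 * θ) - (h - c) ^ 2 / (2 * (1 - θ))
        = -c ^ 2 / 2 + (-b * (h - m) ^ 2) := by
      rw [hb_def, hm_def]
      field_simp
      ring
    rw [hexp, Real.exp_add, hf_def, hA_def]
    ring
  -- step 2 : derivative
  have hderiv : ∀ h : ℝ, HasDerivAt F (f h) h := by
    intro h
    have d1 : HasDerivAt (fun h : ℝ => -((h - m) + (2 * m - c)) / (2 * b))
        (-(1 / (2 * b))) h := by
      have h' := ((((hasDerivAt_id h).sub_const m).add_const (2 * m - c)).neg).div_const (2 * b)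
      simp only [id_eq] at h'
      exact h'.congr_deriv (by ring)
    have dsq : HasDerivAt (fun h : ℝ => -b * (h - m) ^ 2) (-b * (2 * (h - m))) h := by
      have : HasDerivAt (fun h : ℝ => (h - m) ^ 2) (2 * (h - m) ^ 1 * 1) h :=
        ((hasDerivAt_id h).sub_const m).pow 2
      simpa using this.const_mul (-b)
    have d2 : HasDerivAt (fun h : ℝ => Real.exp (-b * (h - m) ^ 2))
        (Real.exp (-b * (h - m) ^ 2) * (-b * (2 * (h - m)))) h := dsq.exp
    have d3 : HasDerivAt (fun h : ℝ => sb * (h - m)) sb h := by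
      simpa using ((hasDerivAt_id h).sub_const m).const_mul sb
    have d4 : HasDerivAt (fun h : ℝ => erf (sb * (h - m)))
        ((2 / Real.sqrt π * Real.exp (-(sb * (h - m)) ^ 2)) * sb) h :=
      by have := (erf_hasDerivAt (sb * (h - m))).comp h d3; exact this
    have hsq : -(sb * (h - m)) ^ 2 = -b * (h - m) ^ 2 := by
      rw [mul_pow, hsb2]; ring
    rw [hsq] at d4
    have dF : HasDerivAt F
        (A * ((-(1 / (2 * b))) * Real.exp (-b * (h - m) ^ 2)
          + (-((h - m) + (2 * m - c)) / (2 * b)) *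
              (Real.exp (-b * (h - m) ^ 2) * (-b * (2 * (h - m))))
          + K * (Real.sqrt π / (2 * sb)) *
              ((2 / Real.sqrt π * Real.exp (-b * (h - m) ^ 2)) * sb))) h := by
      exact (((d1.mul d2).add ((d4.const_mul (K * (Real.sqrt π / (2 * sb)))))).const_mul A).congr_deriv (by ring)
    have heq : A * ((-(1 / (2 * b))) * Real.exp (-b * (h - m) ^ 2)
          + (-((h - m) + (2 * m - c)) / (2 * b)) *
              (Real.exp (-b * (h - m) ^ 2) * (-b * (2 * (h - m))))
          + K * (Real.sqrt π / (2 * sb)) *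
              ((2 / Real.sqrt π * Real.exp (-b * (h - m) ^ 2)) * sb)) = f h := by
      rw [hf_def, hK_def]
      have h1 : Real.sqrt π / (2 * sb) * (2 / Real.sqrt π * Real.exp (-b * (h - m) ^ 2) * sb)
          = Real.exp (-b * (h - m) ^ 2) := by
        field_simp
      field_simp
      ring
    rw [heq] at dF
    exact dF
  -- step 3 : integrability
  have hint : IntegrableOn f (Ioi 0) := by
    have h2i : Integrable (fun t : ℝ => t ^ 2 * Real.exp (-b * t ^ 2)) := by
      have := integrable_rpow_mul_exp_neg_mul_sq hb (s := ((2:ℕ):ℝ)) (by norm_num)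
      simpa [Real.rpow_natCast] using this
    have h1i : Integrable (fun t : ℝ => t * Real.exp (-b * t ^ 2)) :=
      integrable_mul_exp_neg_mul_sq hb
    have h0i : Integrable (fun t : ℝ => Real.exp (-b * t ^ 2)) :=
      integrable_exp_neg_mul_sq hb
    have hg : Integrable (fun t : ℝ => A * ((t + m) * (t + m - c)) * Real.exp (-b * t ^ 2)) := by
      have := ((h2i.add (h1i.const_mul (2 * m - c))).add (h0i.const_mul (m * (m - c)))).const_mul A
      refine this.congr ?_
      filter_upwards with t
      simp only [Pi.add_apply]
      ring
    have := hg.comp_sub_right m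
    refine Integrable.integrableOn (this.congr ?_)
    filter_upwards with x
    have hx : x - m + m = x := by ring
    simp only [hx, hf_def]
  -- step 4 : limit at infinity
  set L : ℝ := A * (K * (Real.sqrt π / (2 * sb))) with hL_def
  have htends : Tendsto F atTop (nhds L) := by
    have texp : Tendsto (fun x : ℝ => Real.exp (-x)) atTop (nhds 0) :=
      Real.tendsto_exp_neg_atTop_nhds_zero
    have texp2 : Tendsto (fun x : ℝ => Real.exp (-(1/2) * x)) atTop (nhds 0) := by
      have h' : Tendsto (fun x : ℝ => (1/2 : ℝ) * x) atTop atTop :=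
        Tendsto.const_mul_atTop (by norm_num) tendsto_id
      exact Filter.Tendsto.congr (fun x => by simp [Function.comp, neg_mul])
        (texp.comp h')
    have t0 : Tendsto (fun x : ℝ => Real.exp (-b * x ^ 2)) atTop (nhds 0) :=
      (exp_neg_mul_sq_isLittleO_exp_neg hb).trans_tendsto texp
    have t1 : Tendsto (fun x : ℝ => x * Real.exp (-b * x ^ 2)) atTop (nhds 0) := by
      have ho := (rpow_mul_exp_neg_mul_sq_isLittleO_exp_neg hb 1).trans_tendsto texp2
      refine ho.congr' ?_
      filter_upwards [eventually_gt_atTop (0:ℝ)] with x hx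
      rw [Real.rpow_one]
    have tcomp : Tendsto (fun h : ℝ => h - m) atTop atTop :=
      tendsto_atTop_add_const_right atTop (-m) tendsto_id
    have tA : Tendsto (fun h : ℝ => -((h - m) + (2 * m - c)) / (2 * b) *
        Real.exp (-b * (h - m) ^ 2)) atTop (nhds 0) := by
      have e1 : Tendsto (fun h : ℝ => (h - m) * Real.exp (-b * (h - m) ^ 2)) atTop (nhds 0) :=
        t1.comp tcomp
      have e0 : Tendsto (fun h : ℝ => Real.exp (-b * (h - m) ^ 2)) atTop (nhds 0) :=
        t0.comp tcomp
      have hcb := (e1.const_mul (-(1 / (2 * b)))).add (e0.const_mul (-((2 * m - c)) / (2 * b)))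
      have h00 : (-(1 / (2 * b)) * 0 + -(2 * m - c) / (2 * b) * 0 : ℝ) = 0 := by ring
      rw [h00] at hcb
      exact hcb.congr (fun x => by ring)
    have tE : Tendsto (fun h : ℝ => erf (sb * (h - m))) atTop (nhds 1) := by
      have : Tendsto (fun h : ℝ => sb * (h - m)) atTop atTop :=
        Tendsto.const_mul_atTop hsb tcomp
      exact erf_tendsto_one.comp this
    have hcomb := (tA.add ((tE.const_mul (K * (Real.sqrt π / (2 * sb)))))).const_mul A
    have hL' : A * (0 + K * (Real.sqrt π / (2 * sb)) * 1) = L := by rw [hL_def]; ring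
    rw [hL'] at hcomb
    exact hcomb
  -- step 5 : apply FTC
  have key : (∫ h in Ioi (0:ℝ), f h) = L - F 0 :=
    integral_Ioi_of_hasDerivAt_of_tendsto' (fun x _ => hderiv x) hint htends
  rw [MeasureTheory.setIntegral_congr_fun measurableSet_Ioi (fun h _ => hcongr h), key]
  -- step 6 : final computation
  set X : ℝ := Real.exp (-c ^ 2 / 2) with hX_def
  set Y : ℝ := Real.exp (-b * ((0:ℝ) - m) ^ 2) with hY_def
  set E : ℝ := erf (sb * ((0:ℝ) - m)) with hE_def
  have habs : |c| = -c := abs_of_nonpos hc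
  have hsθ0 : (0:ℝ) < Real.sqrt θ := Real.sqrt_pos.mpr hθ0
  have hs10 : (0:ℝ) < Real.sqrt (1 - θ) := Real.sqrt_pos.mpr h1θ
  have hs20 : (0:ℝ) < Real.sqrt 2 := by positivity
  have hθ32a : θ ^ ((3:ℝ)/2) = θ * Real.sqrt θ := by
    rw [show ((3:ℝ)/2) = 1 + 1/2 by norm_num, Real.rpow_add hθ0, Real.rpow_one,
      ← Real.sqrt_eq_rpow]
  have hθ32b : (1 - θ) ^ ((3:ℝ)/2) = (1 - θ) * Real.sqrt (1 - θ) := by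
    rw [show ((3:ℝ)/2) = 1 + 1/2 by norm_num, Real.rpow_add h1θ, Real.rpow_one,
      ← Real.sqrt_eq_rpow]
  have hsb' : sb = (Real.sqrt 2 * Real.sqrt θ * Real.sqrt (1 - θ))⁻¹ := by
    rw [hsb_def, hb_def, one_div, Real.sqrt_inv]
    congr 1
    rw [Real.sqrt_mul (by positivity : (0:ℝ) ≤ 2 * θ), Real.sqrt_mul (by norm_num : (0:ℝ) ≤ 2)]
  have h2π : Real.sqrt (2 * π) = Real.sqrt 2 * Real.sqrt π :=
    Real.sqrt_mul (by norm_num) π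
  have hθ1θ : Real.sqrt (θ * (1 - θ)) = Real.sqrt θ * Real.sqrt (1 - θ) :=
    Real.sqrt_mul hθ0.le _
  have harg : |c| * Real.sqrt (θ / (2 * (1 - θ))) = sb * ((0:ℝ) - m) := by
    have h1 : θ / (2 * (1 - θ)) = θ ^ 2 * b := by rw [hb_def]; field_simp
    rw [habs, h1, Real.sqrt_mul (sq_nonneg θ), Real.sqrt_sq hθ0.le, hm_def, hsb_def]
    ring
  have hexp0 : Real.exp (-c ^ 2 / (2 * (1 - θ))) = X * Y := by
    rw [hX_def, hY_def, ← Real.exp_add]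
    congr 1
    rw [hb_def, hm_def]
    field_simp
    ring
  have hT : L - F 0 = A * ((m - c) / (2 * b)) * Y + A * (K * (Real.sqrt π / (2 * sb))) * (1 - E) := by
    simp only [hF_def, hL_def, hY_def, hE_def]
    ring
  have hA1 : A * ((m - c) / (2 * b)) =
      -c * (1 - θ) / (π * (Real.sqrt θ * Real.sqrt (1 - θ))) * X := by
    rw [hA_def, hb_def, hm_def, hθ32a, hθ32b, hX_def]
    field_simp
    ring
  have hb2 : Real.sqrt 2 * Real.sqrt π / (2 * π) = 1 / (Real.sqrt 2 * Real.sqrt π) := by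
    have h2 : Real.sqrt 2 * Real.sqrt 2 = 2 := Real.mul_self_sqrt (by norm_num)
    have hππ : Real.sqrt π * Real.sqrt π = π := Real.mul_self_sqrt Real.pi_pos.le
    rw [div_eq_div_iff (by positivity) (by positivity)]
    linear_combination Real.sqrt π * Real.sqrt π * h2 + 2 * hππ
  have hA2 : A * (K * (Real.sqrt π / (2 * sb))) = (1 - c ^ 2) * X / (Real.sqrt 2 * Real.sqrt π) := by
    have hstep : A * (K * (Real.sqrt π / (2 * sb))) =
        (1 - c ^ 2) * X * (Real.sqrt 2 * Real.sqrt π / (2 * π)) := by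
      rw [hA_def, hK_def, hb_def, hm_def, hsb', hθ32a, hθ32b, hX_def]
      field_simp
      ring
    rw [hstep, hb2]
    ring
  rw [erfc, harg, ← hE_def, hexp0, habs, h2π, hθ1θ, hT, hA1, hA2]
  ring
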